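/- Let m be a finite Borel measure on X. Suppose that for every sufficiently small ε > 0 (in particular with U(ε) ⊆ O), one has lim_{n→∞} [P₁^n m](B) = 0 for every Borel set B ⊆ X \ U(ε) with m(B) > 0. Then the equilibrium x = 0 is almost everywhere almost surely stable with respect to m. -/

import Mathlib

open MeasureTheory Filter Metric Set
open scoped ENNReal Topology

noncomputable section

/-- The restriction `P₁` of the Perron–Frobenius operator to a set `S` (= `X \ {0}`):
`[P₁ μ](B) = ∫_S ∫_W χ_B(T(x,y)) dv(y) dμ(x)`, with the output measure restricted to `S`
(so that the operator can be iterated). -/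
def P1 {α Wsp : Type*} [MeasurableSpace α] [MeasurableSpace Wsp]
    (T : α → Wsp → α) (v : Measure Wsp) (S : Set α) (μ : Measure α) : Measure α :=
  ((μ.restrict S).bind fun x => v.map (T x)).restrict S

/-- The random trajectory `x_{n+1} = T(x_n, y_n)` starting from `x`. -/
def traj {α Wsp : Type*} (T : α → Wsp → α) (x : α) (y : ℕ → Wsp) : ℕ → α
  | 0 => x
  | n + 1 => T (traj T x y n) (y n)


namespace PFStab

variable {W : Type*} [MeasurableSpace W]

/-- Box cylinders over an initial segment of coordinates. -/
def boxCyl (W : Type*) [MeasurableSpace W] : Set (Set (ℕ → W)) :=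
  {C | ∃ n : ℕ, ∃ f : ℕ → Set W, (∀ i, MeasurableSet (f i)) ∧ C = {y | ∀ i < n, y i ∈ f i}}

lemma univ_mem_boxCyl : (univ : Set (ℕ → W)) ∈ boxCyl W := by
  refine ⟨0, fun _ => univ, fun _ => MeasurableSet.univ, ?_⟩
  ext y; simp

lemma isPiSystem_boxCyl : IsPiSystem (boxCyl W) := by
  rintro s ⟨n, f, hf, rfl⟩ t ⟨m, g, hg, rfl⟩ -
  refine ⟨max n m, fun i => (if i < n then f i else univ) ∩ (if i < m then g i else univ),
    fun i => by
      refine MeasurableSet.inter ?_ ?_ <;> split <;>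
        first | exact hf _ | exact hg _ | exact MeasurableSet.univ, ?_⟩
  ext y
  constructor
  · rintro ⟨h1, h2⟩ i _
    constructor
    · split
      · exact h1 i ‹_›
      · trivial
    · split
      · exact h2 i ‹_›
      · trivial
  · intro h
    constructor
    · intro i hi
      have := (h i (lt_of_lt_of_le hi (le_max_left n m))).1
      rwa [if_pos hi] at this
    · intro i hi
      have := (h i (lt_of_lt_of_le hi (le_max_right n m))).2
      rwa [if_pos hi] at this

lemma measurableSet_boxCyl {C : Set (ℕ → W)} (hC : C ∈ boxCyl W) : MeasurableSet C := by
  obtain ⟨n, f, hf, rfl⟩ := hC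
  have : {y : ℕ → W | ∀ i < n, y i ∈ f i} = ⋂ i, ⋂ _ : i < n, (fun y : ℕ → W => y i) ⁻¹' f i := by
    ext y; simp
  rw [this]
  exact MeasurableSet.iInter fun i => MeasurableSet.iInter fun _ =>
    (measurable_pi_apply i) (hf i)

lemma generateFrom_boxCyl :
    MeasurableSpace.generateFrom (boxCyl W) = (inferInstance : MeasurableSpace (ℕ → W)) := by
  refine le_antisymm (MeasurableSpace.generateFrom_le fun C hC => measurableSet_boxCyl hC) ?_
  have : (inferInstance : MeasurableSpace (ℕ → W)) =
      ⨆ i : ℕ, MeasurableSpace.comap (fun y : ℕ → W => y i) (inferInstance) := rfl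
  rw [this]
  refine iSup_le fun i => ?_
  refine measurable_iff_comap_le.mp ?_
  intro s hs
  refine MeasurableSpace.measurableSet_generateFrom ?_
  refine ⟨i + 1, fun j => if j = i then s else univ, fun j => by by_cases h : j = i <;> simp [h, hs], ?_⟩
  ext y
  simp only [mem_preimage, mem_setOf_eq]
  constructor
  · intro hy j hj
    split
    · subst ‹j = i›; exact hy
    · trivial
  · intro hy
    have := hy i (Nat.lt_succ_self i)
    rwa [if_pos rfl] at this

end PFStab

namespace PFStab

variable {W : Type*} [MeasurableSpace W]

/-- The map `y ↦ (y 0, tail y)`. -/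
def headTail : (ℕ → W) → W × (ℕ → W) := fun y => (y 0, fun n => y (n + 1))

lemma measurable_headTail : Measurable (headTail (W := W)) :=
  (measurable_pi_apply 0).prodMk (measurable_pi_lambda _ fun n => measurable_pi_apply (n + 1))

variable (v : Measure W) [IsProbabilityMeasure v]
  (vInf : Measure (ℕ → W)) [IsProbabilityMeasure vInf]
  (hvInf : ∀ (n : ℕ) (f : Fin n → Set W), (∀ i, MeasurableSet (f i)) →
      vInf {y : ℕ → W | ∀ i : Fin n, y (i : ℕ) ∈ f i} = ∏ i, v (f i))

include hvInf in
lemma vInf_box (n : ℕ) (f : ℕ → Set W) (hf : ∀ i, MeasurableSet (f i)) :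
    vInf {y | ∀ i < n, y i ∈ f i} = ∏ i ∈ Finset.range n, v (f i) := by
  have hset : {y : ℕ → W | ∀ i < n, y i ∈ f i} =
      {y : ℕ → W | ∀ i : Fin n, y (i : ℕ) ∈ f (i : ℕ)} := by
    ext y
    exact ⟨fun h i => h i i.2, fun h i hi => h ⟨i, hi⟩⟩
  rw [hset, hvInf n (fun i => f i) (fun i => hf i)]
  exact Fin.prod_univ_eq_prod_range (fun i => v (f i)) n

include hvInf in
lemma map_headTail : vInf.map headTail = v.prod vInf := by
  have hgen : (Prod.instMeasurableSpace : MeasurableSpace (W × (ℕ → W))) =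
      MeasurableSpace.generateFrom
        (image2 (· ×ˢ ·) {s : Set W | MeasurableSet s} (boxCyl W)) := by
    refine (generateFrom_eq_prod MeasurableSpace.generateFrom_measurableSet generateFrom_boxCyl
      isCountablySpanning_measurableSet ?_).symm
    exact ⟨fun _ => univ, fun _ => univ_mem_boxCyl, by simp [iUnion_const]⟩
  haveI : IsProbabilityMeasure (vInf.map headTail) :=
    Measure.isProbabilityMeasure_map measurable_headTail.aemeasurable
  refine ext_of_generate_finite _ hgen
    (MeasurableSpace.isPiSystem_measurableSet.prod isPiSystem_boxCyl) ?_ (by simp)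
  rintro _ ⟨A, hA, C, ⟨n, f, hf, rfl⟩, rfl⟩
  set g : ℕ → Set W := fun i => Nat.rec A (fun j _ => f j) i with hg
  have hCmeas : MeasurableSet {y : ℕ → W | ∀ i < n, y i ∈ f i} :=
    measurableSet_boxCyl ⟨n, f, hf, rfl⟩
  rw [Measure.map_apply measurable_headTail (hA.prod hCmeas), Measure.prod_prod]
  have hpre : headTail ⁻¹' (A ×ˢ {y : ℕ → W | ∀ i < n, y i ∈ f i}) =
      {y : ℕ → W | ∀ i < n + 1, y i ∈ g i} := by
    ext y
    simp only [headTail, mem_preimage, mem_prod, mem_setOf_eq]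
    constructor
    · rintro ⟨h0, h1⟩ i hi
      cases i with
      | zero => exact h0
      | succ j => exact h1 j (Nat.lt_of_succ_lt_succ hi)
    · intro h
      exact ⟨h 0 (Nat.succ_pos n), fun j hj => h (j + 1) (Nat.succ_lt_succ hj)⟩
  rw [hpre, vInf_box v vInf hvInf (n + 1) g (fun i => by cases i with
    | zero => exact hA
    | succ j => exact hf j), vInf_box v vInf hvInf n f hf, Finset.prod_range_succ']
  exact mul_comm _ _

lemma vInf_split (hmap : vInf.map headTail = v.prod vInf)
    {F : Set (W × (ℕ → W))} (hF : MeasurableSet F) :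
    vInf {y | (y 0, fun n => y (n + 1)) ∈ F} = ∫⁻ w, vInf (Prod.mk w ⁻¹' F) ∂v := by
  have h1 : {y : ℕ → W | (y 0, fun n => y (n + 1)) ∈ F} = headTail ⁻¹' F := rfl
  rw [h1, ← Measure.map_apply measurable_headTail hF, hmap, Measure.prod_apply hF]



variable {α W : Type*} [MeasurableSpace α] [MeasurableSpace W]

lemma traj_succ_eq (T : α → W → α) (x : α) (y : ℕ → W) (k : ℕ) :
    traj T x y (k + 1) = traj T (T x (y 0)) (fun n => y (n + 1)) k := by
  induction k with
  | zero => rfl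
  | succ k ih =>
    show T (traj T x y (k + 1)) (y (k + 1)) = _
    rw [ih]
    rfl

lemma measurable_traj {T : α → W → α} (hT : Measurable (Function.uncurry T)) (n : ℕ) :
    Measurable fun p : α × (ℕ → W) => traj T p.1 p.2 n := by
  induction n with
  | zero => exact measurable_fst
  | succ n ih => exact hT.comp (ih.prodMk ((measurable_pi_apply n).comp measurable_snd))

/-- probability of staying in `B` for `n` steps, defined by backward recursion. -/
def stayProb (T : α → W → α) (v : Measure W) (B : Set α) : ℕ → α → ℝ≥0∞
  | 0 => B.indicator 1
  | n + 1 => B.indicator fun x => ∫⁻ w, stayProb T v B n (T x w) ∂v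

lemma stayProb_of_not_mem {T : α → W → α} {v : Measure W} {B : Set α} {x : α}
    (hx : x ∉ B) (n : ℕ) : stayProb T v B n x = 0 := by
  cases n <;> simp [stayProb, Set.indicator_of_notMem hx]

lemma measurable_stayProb {T : α → W → α} (hT : Measurable (Function.uncurry T))
    {v : Measure W} [SFinite v] {B : Set α} (hB : MeasurableSet B) (n : ℕ) :
    Measurable (stayProb T v B n) := by
  induction n with
  | zero => exact measurable_one.indicator hB
  | succ n ih =>
    refine (Measurable.lintegral_prod_right ?_).indicator hB
    exact ih.comp hT

lemma lintegral_stayProb_le {T : α → W → α} (hT : Measurable (Function.uncurry T))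
    (v : Measure W) [IsProbabilityMeasure v] {S B : Set α} (hS : MeasurableSet S)
    (hB : MeasurableSet B) (hBS : B ⊆ S) :
    ∀ (n : ℕ) (μ : Measure α), ∫⁻ x, stayProb T v B n x ∂μ ≤ ((P1 T v S)^[n] μ) B := by
  have hκ : Measurable fun x : α => v.map (T x) := by
    apply Measure.measurable_of_measurable_coe
    intro s hs
    have h1 : ∀ x : α, v.map (T x) s = v (Prod.mk x ⁻¹' (Function.uncurry T ⁻¹' s)) := fun x =>
      Measure.map_apply (hT.comp measurable_prodMk_left) hs
    simp_rw [h1]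
    exact measurable_measure_prodMk_left (hT hs)
  intro n
  induction n with
  | zero =>
    intro μ
    rw [Function.iterate_zero, id]
    exact le_of_eq (lintegral_indicator_one hB)
  | succ n ih =>
    intro μ
    have key : ∫⁻ x, stayProb T v B n x ∂(P1 T v S μ) =
        ∫⁻ x in S, ∫⁻ w, stayProb T v B n (T x w) ∂v ∂μ := by
      have hsupp : S.indicator (stayProb T v B n) = stayProb T v B n := by
        funext x
        by_cases hx : x ∈ S
        · rw [Set.indicator_of_mem hx]
        · rw [Set.indicator_of_notMem hx, stayProb_of_not_mem (fun hB' => hx (hBS hB')) n]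
      calc ∫⁻ x, stayProb T v B n x ∂(P1 T v S μ)
          = ∫⁻ x in S, stayProb T v B n x ∂((μ.restrict S).bind fun x => v.map (T x)) := rfl
        _ = ∫⁻ x, S.indicator (stayProb T v B n) x ∂((μ.restrict S).bind fun x => v.map (T x)) :=
            (lintegral_indicator hS _).symm
        _ = ∫⁻ x, stayProb T v B n x ∂((μ.restrict S).bind fun x => v.map (T x)) := by
            rw [hsupp]
        _ = ∫⁻ x, ∫⁻ z, stayProb T v B n z ∂(v.map (T x)) ∂(μ.restrict S) :=
            Measure.lintegral_bind hκ.aemeasurable (measurable_stayProb hT hB n).aemeasurable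
        _ = ∫⁻ x in S, ∫⁻ w, stayProb T v B n (T x w) ∂v ∂μ := by
            refine lintegral_congr fun x => ?_
            exact lintegral_map (measurable_stayProb hT hB n) (hT.comp measurable_prodMk_left)
    calc ∫⁻ x, stayProb T v B (n + 1) x ∂μ
        = ∫⁻ x in B, ∫⁻ w, stayProb T v B n (T x w) ∂v ∂μ := lintegral_indicator hB _
      _ ≤ ∫⁻ x in S, ∫⁻ w, stayProb T v B n (T x w) ∂v ∂μ :=
          lintegral_mono' (Measure.restrict_mono hBS le_rfl) le_rfl
      _ = ∫⁻ x, stayProb T v B n x ∂(P1 T v S μ) := key.symm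
      _ ≤ ((P1 T v S)^[n] (P1 T v S μ)) B := ih _
      _ = ((P1 T v S)^[n + 1] μ) B := by rw [Function.iterate_succ_apply]


lemma vInf_stay_le_stayProb {α : Type*} [MeasurableSpace α] {W : Type*} [MeasurableSpace W]
    {T : α → W → α} (hT : Measurable (Function.uncurry T))
    (v : Measure W) [IsProbabilityMeasure v] (vInf : Measure (ℕ → W)) [IsProbabilityMeasure vInf]
    (hmap : vInf.map headTail = v.prod vInf) {B : Set α} (hB : MeasurableSet B) :
    ∀ (n : ℕ) (x : α), vInf {y | ∀ k ≤ n, traj T x y k ∈ B} ≤ stayProb T v B n x := by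
  intro n
  induction n with
  | zero =>
    intro x
    by_cases hx : x ∈ B
    · have h1 : stayProb T v B 0 x = 1 := by simp [stayProb, Set.indicator_of_mem hx]
      rw [h1]
      exact le_trans (measure_mono (subset_univ _)) (le_of_eq measure_univ)
    · rw [stayProb_of_not_mem hx]
      have h2 : {y : ℕ → W | ∀ k ≤ 0, traj T x y k ∈ B} = ∅ :=
        eq_empty_iff_forall_notMem.mpr fun y hy => hx (hy 0 le_rfl)
      rw [h2, measure_empty]
  | succ n ih =>
    intro x
    by_cases hx : x ∈ B
    · have hF : MeasurableSet {p : W × (ℕ → W) | ∀ k ≤ n, traj T (T x p.1) p.2 k ∈ B} := by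
        have hmap2 : Measurable fun p : W × (ℕ → W) => (T x p.1, p.2) :=
          ((hT.comp measurable_prodMk_left).comp measurable_fst).prodMk measurable_snd
        have h3 : {p : W × (ℕ → W) | ∀ k ≤ n, traj T (T x p.1) p.2 k ∈ B} =
            ⋂ k, ⋂ _ : k ≤ n, (fun p : W × (ℕ → W) => traj T (T x p.1) p.2 k) ⁻¹' B := by
          ext p; simp
        rw [h3]
        exact MeasurableSet.iInter fun k => MeasurableSet.iInter fun _ =>
          ((measurable_traj hT k).comp hmap2) hB
      have hsub : {y : ℕ → W | ∀ k ≤ n + 1, traj T x y k ∈ B} ⊆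
          {y : ℕ → W | (y 0, fun i => y (i + 1)) ∈
            {p : W × (ℕ → W) | ∀ k ≤ n, traj T (T x p.1) p.2 k ∈ B}} := by
        intro y hy k hk
        show traj T (T x (y 0)) (fun i => y (i + 1)) k ∈ B
        rw [← traj_succ_eq]
        exact hy (k + 1) (Nat.succ_le_succ hk)
      calc vInf {y | ∀ k ≤ n + 1, traj T x y k ∈ B}
          ≤ vInf {y : ℕ → W | (y 0, fun i => y (i + 1)) ∈
              {p : W × (ℕ → W) | ∀ k ≤ n, traj T (T x p.1) p.2 k ∈ B}} := measure_mono hsub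
        _ = ∫⁻ w, vInf (Prod.mk w ⁻¹'
              {p : W × (ℕ → W) | ∀ k ≤ n, traj T (T x p.1) p.2 k ∈ B}) ∂v :=
            vInf_split v vInf hmap hF
        _ ≤ ∫⁻ w, stayProb T v B n (T x w) ∂v := lintegral_mono fun w => ih (T x w)
        _ = stayProb T v B (n + 1) x := by
            simp only [stayProb, Set.indicator_of_mem hx]
    · rw [stayProb_of_not_mem hx]
      have h2 : {y : ℕ → W | ∀ k ≤ n + 1, traj T x y k ∈ B} = ∅ :=
        eq_empty_iff_forall_notMem.mpr fun y hy => hx (hy 0 (Nat.zero_le _))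
      rw [h2, measure_empty]

end PFStab

/-- if `[P₁^n m](B) → 0` for every Borel `B ⊆ X \ U(ε)` with `m(B) > 0`,
for every sufficiently small `ε > 0` (i.e. every `ε > 0` with `U(ε) ⊆ O`), then the
equilibrium `x = 0` is almost everywhere almost surely stable with respect to `m`.
Here `vInf` is the infinite product measure `v^∞` on `W^ℕ`, characterized on cylinders. -/
theorem ae_almost_sure_stable_of_pf_iterates_tendsto_zero
    {d : ℕ} {Wsp : Type*} [MeasurableSpace Wsp]
    (X : Set (EuclideanSpace ℝ (Fin d))) (hX : IsCompact X)
    (v : Measure Wsp) [IsProbabilityMeasure v]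
    (T : EuclideanSpace ℝ (Fin d) → Wsp → EuclideanSpace ℝ (Fin d))
    (hT : Measurable (Function.uncurry T))
    (hTcont : ∀ y : Wsp, Continuous fun x => T x y)
    (hTX : ∀ x ∈ X, ∀ y, T x y ∈ X)
    (heq : ∀ y : Wsp, T 0 y = 0)
    -- the infinite product measure `v^∞` on `W^ℕ`
    (vInf : Measure (ℕ → Wsp)) [IsProbabilityMeasure vInf]
    (hvInf : ∀ (n : ℕ) (f : Fin n → Set Wsp), (∀ i, MeasurableSet (f i)) →
      vInf {y : ℕ → Wsp | ∀ i : Fin n, y (i : ℕ) ∈ f i} = ∏ i, v (f i))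
    -- local stability assumption: `O` is a neighborhood of `0` in `X` such that, starting
    -- from any `x₀ ∈ O`, almost surely the trajectory stays in `O` and converges to `0`
    (O : Set (EuclideanSpace ℝ (Fin d))) (hO : O ∈ nhdsWithin 0 X) (hOX : O ⊆ X)
    (hstab : ∀ x₀ ∈ O, ∀ᵐ y ∂vInf,
      (∀ n : ℕ, traj T x₀ y n ∈ O) ∧ Tendsto (traj T x₀ y) atTop (nhds 0))
    (m : Measure (EuclideanSpace ℝ (Fin d))) [IsFiniteMeasure m] (hmX : m Xᶜ = 0)
    -- main hypothesis: decay of the iterates of `P₁` outside every small neighborhood `U(ε)`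
    (hmain : ∀ ε : ℝ, 0 < ε → X ∩ ball 0 ε ⊆ O →
      ∀ B : Set (EuclideanSpace ℝ (Fin d)), MeasurableSet B → B ⊆ X \ ball 0 ε →
        0 < m B →
        Tendsto (fun n => ((P1 T v (X \ {0}))^[n] m) B) atTop (nhds 0)) :
    -- conclusion: `x = 0` is a.e. almost surely stable w.r.t. `m`
    ∀ δ : ENNReal, 0 < δ →
      m {x : EuclideanSpace ℝ (Fin d) |
          δ ≤ vInf {y : ℕ → Wsp | ¬ Tendsto (traj T x y) atTop (nhds 0)}} = 0 := by
  intro δ hδ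
  obtain ⟨U, hUopen, hU0, hUO⟩ := mem_nhdsWithin.mp hO
  obtain ⟨ε, hε, hballU⟩ := Metric.isOpen_iff.mp hUopen 0 hU0
  have hOε : X ∩ ball 0 ε ⊆ O := fun x hx => hUO ⟨hballU hx.2, hx.1⟩
  set B : Set (EuclideanSpace ℝ (Fin d)) := X \ ball 0 ε with hBdef
  have hBmeas : MeasurableSet B := hX.isClosed.measurableSet.diff measurableSet_ball
  have h0ball : (0 : EuclideanSpace ℝ (Fin d)) ∈ ball (0 : EuclideanSpace ℝ (Fin d)) ε := mem_ball_self hε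
  have hBS : B ⊆ X \ {0} := fun x hx => ⟨hx.1, fun h => hx.2 (by rw [mem_singleton_iff] at h; rw [h]; exact h0ball)⟩
  have hSmeas : MeasurableSet (X \ {0}) := hX.isClosed.measurableSet.diff (measurableSet_singleton 0)
  have hmap := PFStab.map_headTail v vInf hvInf
  have hK : MeasurableSet {p : EuclideanSpace ℝ (Fin d) × (ℕ → Wsp) | ∀ k : ℕ, traj T p.1 p.2 k ∈ B} := by
    have h1 : {p : EuclideanSpace ℝ (Fin d) × (ℕ → Wsp) | ∀ k : ℕ, traj T p.1 p.2 k ∈ B} =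
        ⋂ k, (fun p : EuclideanSpace ℝ (Fin d) × (ℕ → Wsp) => traj T p.1 p.2 k) ⁻¹' B := by ext p; simp
    rw [h1]
    exact MeasurableSet.iInter fun k => (PFStab.measurable_traj hT k) hBmeas
  set G : Set (EuclideanSpace ℝ (Fin d)) := {x | δ ≤ vInf {y | ∀ k : ℕ, traj T x y k ∈ B}} with hGdef
  have hGmeas : MeasurableSet G := by
    have hm : Measurable fun x : EuclideanSpace ℝ (Fin d) =>
        vInf (Prod.mk x ⁻¹' {p : EuclideanSpace ℝ (Fin d) × (ℕ → Wsp) | ∀ k : ℕ, traj T p.1 p.2 k ∈ B}) :=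
      measurable_measure_prodMk_left hK
    exact hm measurableSet_Ici
  have hkey : ∀ n : ℕ, δ * m G ≤ ((P1 T v (X \ {0}))^[n] m) B := by
    intro n
    have h1 : ∀ x, G.indicator (fun _ => δ) x ≤ PFStab.stayProb T v B n x := by
      intro x
      by_cases hx : x ∈ G
      · rw [Set.indicator_of_mem hx]
        calc δ ≤ vInf {y | ∀ k : ℕ, traj T x y k ∈ B} := hx
          _ ≤ vInf {y | ∀ k ≤ n, traj T x y k ∈ B} :=
              measure_mono (fun y hy k _ => hy k)
          _ ≤ PFStab.stayProb T v B n x :=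
              PFStab.vInf_stay_le_stayProb hT v vInf hmap hBmeas n x
      · rw [Set.indicator_of_notMem hx]; exact zero_le
    calc δ * m G = ∫⁻ x, G.indicator (fun _ => δ) x ∂m :=
          (lintegral_indicator_const hGmeas δ).symm
      _ ≤ ∫⁻ x, PFStab.stayProb T v B n x ∂m := lintegral_mono h1
      _ ≤ ((P1 T v (X \ {0}))^[n] m) B :=
          PFStab.lintegral_stayProb_le hT v hSmeas hBmeas hBS n m
  have hmG : m G = 0 := by
    by_contra hmG
    have hGB : G ⊆ B := by
      intro x hx
      have hne : {y : ℕ → Wsp | ∀ k : ℕ, traj T x y k ∈ B}.Nonempty := by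
        rcases eq_empty_or_nonempty {y : ℕ → Wsp | ∀ k : ℕ, traj T x y k ∈ B} with h | h
        · exfalso
          have : δ ≤ 0 := by
            have := hx
            rw [hGdef] at this
            simpa [h] using this
          exact absurd (le_antisymm this zero_le) (ne_of_gt hδ)
        · exact h
      obtain ⟨y, hy⟩ := hne
      exact hy 0
    have hmB : 0 < m B :=
      lt_of_lt_of_le (pos_iff_ne_zero.mpr hmG) (measure_mono hGB)
    have htend := hmain ε hε hOε B hBmeas subset_rfl hmB
    have hle : δ * m G ≤ 0 := ge_of_tendsto' htend hkey
    exact (mul_ne_zero (ne_of_gt hδ) hmG) (le_antisymm hle zero_le)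
  set Oε : Set (EuclideanSpace ℝ (Fin d)) := X ∩ ball 0 ε with hOεdef
  have hOεmeas : MeasurableSet Oε := hX.isClosed.measurableSet.inter measurableSet_ball
  have hstab' : ∀ x ∈ Oε, vInf {y | ¬ Tendsto (traj T x y) atTop (𝓝 0)} = 0 := by
    intro x hx
    have h1 := hstab x (hOε hx)
    rw [ae_iff] at h1
    refine measure_mono_null ?_ h1
    intro y hy hc
    exact hy hc.2
  have hTmeasset : MeasurableSet
      {p : EuclideanSpace ℝ (Fin d) × (ℕ → Wsp) | Tendsto (fun n => traj T p.1 p.2 n) atTop (𝓝 0)} := by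
    exact measurableSet_tendsto_fun (fun n => PFStab.measurable_traj hT n) measurable_const
  have hnull : ∀ (k : ℕ) (x : EuclideanSpace ℝ (Fin d)),
      vInf {y | traj T x y k ∈ Oε ∧ ¬ Tendsto (traj T x y) atTop (𝓝 0)} = 0 := by
    intro k
    induction k with
    | zero =>
      intro x
      by_cases hx : x ∈ Oε
      · exact measure_mono_null (fun y hy => hy.2) (hstab' x hx)
      · have h2 : {y : ℕ → Wsp | traj T x y 0 ∈ Oε ∧
            ¬ Tendsto (traj T x y) atTop (𝓝 0)} = ∅ :=
          eq_empty_iff_forall_notMem.mpr fun y hy => hx hy.1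
        rw [h2, measure_empty]
    | succ k ih =>
      intro x
      have hmap2 : Measurable fun p : Wsp × (ℕ → Wsp) => (T x p.1, p.2) :=
        ((hT.comp measurable_prodMk_left).comp measurable_fst).prodMk measurable_snd
      have hF : MeasurableSet {p : Wsp × (ℕ → Wsp) | traj T (T x p.1) p.2 k ∈ Oε ∧
          ¬ Tendsto (traj T (T x p.1) p.2) atTop (𝓝 0)} := by
        have h4 : {p : Wsp × (ℕ → Wsp) | traj T (T x p.1) p.2 k ∈ Oε ∧
            ¬ Tendsto (traj T (T x p.1) p.2) atTop (𝓝 0)} =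
            ((fun p : Wsp × (ℕ → Wsp) => traj T (T x p.1) p.2 k) ⁻¹' Oε) ∩
              ((fun p : Wsp × (ℕ → Wsp) => (T x p.1, p.2)) ⁻¹'
                {p : EuclideanSpace ℝ (Fin d) × (ℕ → Wsp) |
                  Tendsto (fun n => traj T p.1 p.2 n) atTop (𝓝 0)})ᶜ := rfl
        rw [h4]
        exact (((PFStab.measurable_traj hT k).comp hmap2) hOεmeas).inter
          (hmap2 hTmeasset).compl
      have hset : {y : ℕ → Wsp | traj T x y (k + 1) ∈ Oε ∧
          ¬ Tendsto (traj T x y) atTop (𝓝 0)} =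
          {y : ℕ → Wsp | (y 0, fun n => y (n + 1)) ∈
            {p : Wsp × (ℕ → Wsp) | traj T (T x p.1) p.2 k ∈ Oε ∧
              ¬ Tendsto (traj T (T x p.1) p.2) atTop (𝓝 0)}} := by
        ext y
        simp only [mem_setOf_eq]
        have hfun : traj T (T x (y 0)) (fun i => y (i + 1)) =
            fun n => traj T x y (n + 1) :=
          funext fun n => (PFStab.traj_succ_eq T x y n).symm
        rw [PFStab.traj_succ_eq T x y k]
        constructor
        · rintro ⟨h1, h2⟩
          refine ⟨h1, fun hc => h2 ?_⟩
          rw [hfun] at hc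
          exact (tendsto_add_atTop_iff_nat 1).mp hc
        · rintro ⟨h1, h2⟩
          refine ⟨h1, fun hc => h2 ?_⟩
          rw [hfun]
          exact (tendsto_add_atTop_iff_nat 1).mpr hc
      rw [hset, PFStab.vInf_split v vInf hmap hF]
      have hz : ∀ w, vInf (Prod.mk w ⁻¹'
          {p : Wsp × (ℕ → Wsp) | traj T (T x p.1) p.2 k ∈ Oε ∧
            ¬ Tendsto (traj T (T x p.1) p.2) atTop (𝓝 0)}) = 0 := fun w => ih (T x w)
      rw [lintegral_congr hz, lintegral_zero]
  have htrajX : ∀ x ∈ X, ∀ (y : ℕ → Wsp) (k : ℕ), traj T x y k ∈ X := by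
    intro x hx y k
    induction k with
    | zero => exact hx
    | succ k ih => exact hTX _ ih _
  have hsub : {x : EuclideanSpace ℝ (Fin d) | δ ≤ vInf {y : ℕ → Wsp | ¬ Tendsto (traj T x y) atTop (𝓝 0)}} ⊆
      G ∪ Xᶜ := by
    intro x hx
    by_cases hxX : x ∈ X
    · left
      show δ ≤ vInf {y | ∀ k : ℕ, traj T x y k ∈ B}
      refine le_trans hx ?_
      have hcover : {y : ℕ → Wsp | ¬ Tendsto (traj T x y) atTop (𝓝 0)} ⊆
          {y | ∀ k : ℕ, traj T x y k ∈ B} ∪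
            ⋃ k : ℕ, {y | traj T x y k ∈ Oε ∧ ¬ Tendsto (traj T x y) atTop (𝓝 0)} := by
        intro y hy
        by_cases hall : ∀ k : ℕ, traj T x y k ∈ B
        · exact Or.inl hall
        · push_neg at hall
          obtain ⟨k, hk⟩ := hall
          refine Or.inr (mem_iUnion.mpr ⟨k, ⟨⟨htrajX x hxX y k, ?_⟩, hy⟩⟩)
          by_contra h
          exact hk ⟨htrajX x hxX y k, h⟩
      calc vInf {y : ℕ → Wsp | ¬ Tendsto (traj T x y) atTop (𝓝 0)}
          ≤ vInf ({y | ∀ k : ℕ, traj T x y k ∈ B} ∪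
              ⋃ k : ℕ, {y | traj T x y k ∈ Oε ∧ ¬ Tendsto (traj T x y) atTop (𝓝 0)}) :=
            measure_mono hcover
        _ ≤ vInf {y | ∀ k : ℕ, traj T x y k ∈ B} +
            vInf (⋃ k : ℕ, {y | traj T x y k ∈ Oε ∧
              ¬ Tendsto (traj T x y) atTop (𝓝 0)}) := measure_union_le _ _
        _ = vInf {y | ∀ k : ℕ, traj T x y k ∈ B} := by
            rw [measure_iUnion_null (fun k => hnull k x), add_zero]
    · exact Or.inr hxX
  refine le_antisymm ?_ zero_le
  calc m {x : EuclideanSpace ℝ (Fin d) | δ ≤ vInf {y : ℕ → Wsp | ¬ Tendsto (traj T x y) atTop (𝓝 0)}}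
      ≤ m (G ∪ Xᶜ) := measure_mono hsub
    _ ≤ m G + m Xᶜ := measure_union_le _ _
    _ = 0 := by rw [hmG, hmX, add_zero]
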